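/- Let $w,\bar w:[0,1]\to(0,\infty)$ be continuous on $[0,1)$ with $w(\eta),\bar w(\eta)\ge \gamma_0>0$ for $\eta\in[0,m]$ where $m = \max\{u,\bar u\}<1$, and $1/w,\,1/\bar w \ge 1/C$ everywhere. Suppose $u,\bar u\in[0,1)$ satisfy $\int_0^{\bar u}\frac{d\eta}{\bar w(\eta)} = \int_0^{u}\frac{d\eta}{w(\eta)}$. Then $|\bar u - u| \le \frac{C}{\gamma_0^2}\int_0^1 |\bar w(\eta) - w(\eta)|\,d\eta$. -/

import Mathlib

open Real Set intervalIntegral MeasureTheory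

lemma stmt10_aux
    (C γ0 u ubar : ℝ) (hC : 0 < C) (hγ0 : 0 < γ0)
    (hu : u ∈ Set.Ico (0:ℝ) 1) (hubar : ubar ∈ Set.Ico (0:ℝ) 1)
    (w wbar : ℝ → ℝ)
    (hwc : ContinuousOn w (Set.Ico 0 1)) (hwbarc : ContinuousOn wbar (Set.Ico 0 1))
    (hwpos : ∀ η ∈ Set.Ico (0:ℝ) 1, 0 < w η ∧ 0 < wbar η)
    (hlb : ∀ η ∈ Set.Icc (0:ℝ) (max u ubar), γ0 ≤ w η ∧ γ0 ≤ wbar η)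
    (hub : ∀ η ∈ Set.Icc (0:ℝ) 1, w η ≤ C ∧ wbar η ≤ C)
    (heq : ∫ η in (0:ℝ)..ubar, (wbar η)⁻¹ = ∫ η in (0:ℝ)..u, (w η)⁻¹)
    (hle : u ≤ ubar) :
    ubar - u ≤ C / γ0 ^ 2 * ∫ η in (0:ℝ)..1, |wbar η - w η| := by
  have hmax : max u ubar = ubar := max_eq_right hle
  have hsub1 : Set.Icc (0:ℝ) u ⊆ Set.Ico 0 1 :=
    fun x hx => ⟨hx.1, lt_of_le_of_lt hx.2 hu.2⟩
  have hsub2 : Set.Icc u ubar ⊆ Set.Ico 0 1 :=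
    fun x hx => ⟨le_trans hu.1 hx.1, lt_of_le_of_lt hx.2 hubar.2⟩
  have hsub2' : Set.uIcc u ubar ⊆ Set.Ico 0 1 := by
    rw [Set.uIcc_of_le hle]; exact hsub2
  have hsub1' : Set.uIcc (0:ℝ) u ⊆ Set.Ico 0 1 := by
    rw [Set.uIcc_of_le hu.1]; exact hsub1
  have hsub3' : Set.uIcc (0:ℝ) ubar ⊆ Set.Ico 0 1 := by
    rw [Set.uIcc_of_le hubar.1]
    exact fun x hx => ⟨hx.1, lt_of_le_of_lt hx.2 hubar.2⟩
  -- integrability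
  have hIw : IntervalIntegrable (fun η => (w η)⁻¹) volume 0 u :=
    (((hwc.mono hsub1').inv₀ (fun x hx => (hwpos x (hsub1' hx)).1.ne')).intervalIntegrable)
  have hIwb1 : IntervalIntegrable (fun η => (wbar η)⁻¹) volume 0 u :=
    (((hwbarc.mono hsub1').inv₀ (fun x hx => (hwpos x (hsub1' hx)).2.ne')).intervalIntegrable)
  have hIwb2 : IntervalIntegrable (fun η => (wbar η)⁻¹) volume u ubar :=
    (((hwbarc.mono hsub2').inv₀ (fun x hx => (hwpos x (hsub2' hx)).2.ne')).intervalIntegrable)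
  have habs : IntervalIntegrable (fun η => |wbar η - w η|) volume 0 u :=
    (((hwbarc.mono hsub1').sub (hwc.mono hsub1')).abs).intervalIntegrable
  -- integrability of |wbar - w| on [0,1]
  have hI01 : IntervalIntegrable (fun η => |wbar η - w η|) volume 0 1 := by
    rw [intervalIntegrable_iff_integrableOn_Ioc_of_le zero_le_one,
      integrableOn_Ioc_iff_integrableOn_Ioo]
    have hsm : AEStronglyMeasurable (fun η => |wbar η - w η|)
        (volume.restrict (Set.Ioo (0:ℝ) 1)) :=
      (((hwbarc.mono Set.Ioo_subset_Ico_self).sub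
        (hwc.mono Set.Ioo_subset_Ico_self)).abs).aestronglyMeasurable measurableSet_Ioo
    refine ⟨hsm, HasFiniteIntegral.restrict_of_bounded (C := C + C) (by simp) ?_⟩
    rw [ae_restrict_iff' measurableSet_Ioo]
    refine ae_of_all _ fun x hx => ?_
    have hx' : x ∈ Set.Ico (0:ℝ) 1 := ⟨hx.1.le, hx.2⟩
    have hx'' : x ∈ Set.Icc (0:ℝ) 1 := ⟨hx.1.le, hx.2.le⟩
    have h1 := (hwpos x hx').1
    have h2 := (hwpos x hx').2
    have h3 := (hub x hx'').1
    have h4 := (hub x hx'').2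
    rw [Real.norm_eq_abs, abs_abs]
    calc |wbar x - w x| ≤ |wbar x| + |w x| := abs_sub _ _
      _ ≤ C + C := by rw [abs_of_pos h2, abs_of_pos h1]; linarith
  -- key identity
  have hkey : ∫ η in u..ubar, (wbar η)⁻¹
      = ∫ η in (0:ℝ)..u, ((w η)⁻¹ - (wbar η)⁻¹) := by
    rw [intervalIntegral.integral_sub hIw hIwb1, ← heq,
      ← intervalIntegral.integral_add_adjacent_intervals hIwb1 hIwb2]
    ring
  -- lower bound
  have hlow : (ubar - u) * C⁻¹ ≤ ∫ η in u..ubar, (wbar η)⁻¹ := by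
    have := intervalIntegral.integral_mono_on hle
      (intervalIntegrable_const (c := C⁻¹)) hIwb2
      (fun x hx => by
        have hx1 : x ∈ Set.Icc (0:ℝ) 1 := ⟨le_trans hu.1 hx.1, (lt_of_le_of_lt hx.2 hubar.2).le⟩
        exact inv_anti₀ (hwpos x (hsub2 hx)).2 (hub x hx1).2)
    simpa using this
  -- pointwise upper bound
  have hpt : ∀ x ∈ Set.Icc (0:ℝ) u,
      (w x)⁻¹ - (wbar x)⁻¹ ≤ (γ0 ^ 2)⁻¹ * |wbar x - w x| := by
    intro x hx
    have hx1 : x ∈ Set.Icc (0:ℝ) (max u ubar) := ⟨hx.1, le_trans hx.2 (le_max_left _ _)⟩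
    have hw := (hlb x hx1).1
    have hwb := (hlb x hx1).2
    have hwpos' := lt_of_lt_of_le hγ0 hw
    have hwbpos' := lt_of_lt_of_le hγ0 hwb
    have hne1 : w x ≠ 0 := hwpos'.ne'
    have hne2 : wbar x ≠ 0 := hwbpos'.ne'
    have heq2 : (w x)⁻¹ - (wbar x)⁻¹ = (wbar x - w x) / (w x * wbar x) := by
      field_simp
    rw [heq2]
    have h1 : (wbar x - w x) / (w x * wbar x) ≤ |wbar x - w x| / (w x * wbar x) :=
      div_le_div_of_nonneg_right (le_abs_self _) (mul_pos hwpos' hwbpos').le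
    have h2 : |wbar x - w x| / (w x * wbar x) ≤ |wbar x - w x| / (γ0 ^ 2) := by
      apply div_le_div_of_nonneg_left (abs_nonneg _) (by positivity)
      calc γ0 ^ 2 = γ0 * γ0 := sq γ0
        _ ≤ w x * wbar x := mul_le_mul hw hwb hγ0.le (le_trans hγ0.le hw)
    calc (wbar x - w x) / (w x * wbar x) ≤ |wbar x - w x| / (γ0 ^ 2) := h1.trans h2
      _ = (γ0 ^ 2)⁻¹ * |wbar x - w x| := by rw [inv_mul_eq_div]
  -- combine
  have hup : ∫ η in (0:ℝ)..u, ((w η)⁻¹ - (wbar η)⁻¹)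
      ≤ ∫ η in (0:ℝ)..u, (γ0 ^ 2)⁻¹ * |wbar η - w η| := by
    apply intervalIntegral.integral_mono_on hu.1 (hIw.sub hIwb1)
      (habs.const_mul _)
    exact hpt
  have hmono : ∫ η in (0:ℝ)..u, |wbar η - w η| ≤ ∫ η in (0:ℝ)..1, |wbar η - w η| := by
    apply intervalIntegral.integral_mono_interval le_rfl hu.1 hu.2.le
      (ae_of_all _ fun x => abs_nonneg _) hI01
  have hInn : (0:ℝ) ≤ ∫ η in (0:ℝ)..u, |wbar η - w η| :=
    intervalIntegral.integral_nonneg hu.1 (fun x _ => abs_nonneg _)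
  rw [intervalIntegral.integral_const_mul] at hup
  have hCinv : (0:ℝ) < C⁻¹ := by positivity
  have hfinal : (ubar - u) * C⁻¹ ≤ (γ0 ^ 2)⁻¹ * ∫ η in (0:ℝ)..1, |wbar η - w η| := by
    calc (ubar - u) * C⁻¹ ≤ ∫ η in u..ubar, (wbar η)⁻¹ := hlow
      _ = ∫ η in (0:ℝ)..u, ((w η)⁻¹ - (wbar η)⁻¹) := hkey
      _ ≤ (γ0 ^ 2)⁻¹ * ∫ η in (0:ℝ)..u, |wbar η - w η| := hup
      _ ≤ (γ0 ^ 2)⁻¹ * ∫ η in (0:ℝ)..1, |wbar η - w η| := by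
          apply mul_le_mul_of_nonneg_left hmono (by positivity)
  have := mul_le_mul_of_nonneg_left hfinal hC.le
  calc ubar - u = C * ((ubar - u) * C⁻¹) := by field_simp
    _ ≤ C * ((γ0 ^ 2)⁻¹ * ∫ η in (0:ℝ)..1, |wbar η - w η|) := this
    _ = C / γ0 ^ 2 * ∫ η in (0:ℝ)..1, |wbar η - w η| := by ring


theorem stmt_10
    (C γ0 u ubar : ℝ) (hC : 0 < C) (hγ0 : 0 < γ0)
    (hu : u ∈ Set.Ico (0:ℝ) 1) (hubar : ubar ∈ Set.Ico (0:ℝ) 1)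
    (w wbar : ℝ → ℝ)
    (hwc : ContinuousOn w (Set.Ico 0 1)) (hwbarc : ContinuousOn wbar (Set.Ico 0 1))
    (hwpos : ∀ η ∈ Set.Ico (0:ℝ) 1, 0 < w η ∧ 0 < wbar η)
    (hlb : ∀ η ∈ Set.Icc (0:ℝ) (max u ubar), γ0 ≤ w η ∧ γ0 ≤ wbar η)
    (hub : ∀ η ∈ Set.Icc (0:ℝ) 1, w η ≤ C ∧ wbar η ≤ C)
    (heq : ∫ η in (0:ℝ)..ubar, (wbar η)⁻¹ = ∫ η in (0:ℝ)..u, (w η)⁻¹) :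
    |ubar - u| ≤ C / γ0 ^ 2 * ∫ η in (0:ℝ)..1, |wbar η - w η| := by
  rcases le_total u ubar with h | h
  · rw [abs_of_nonneg (by linarith)]
    exact stmt10_aux C γ0 u ubar hC hγ0 hu hubar w wbar hwc hwbarc hwpos hlb hub heq h
  · rw [abs_of_nonpos (by linarith), neg_sub]
    have hlb' : ∀ η ∈ Set.Icc (0:ℝ) (max ubar u), γ0 ≤ wbar η ∧ γ0 ≤ w η := by
      intro η hη
      rw [max_comm] at hη
      exact (hlb η hη).symm
    have hub' : ∀ η ∈ Set.Icc (0:ℝ) 1, wbar η ≤ C ∧ w η ≤ C :=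
      fun η hη => (hub η hη).symm
    have hwpos' : ∀ η ∈ Set.Ico (0:ℝ) 1, 0 < wbar η ∧ 0 < w η :=
      fun η hη => (hwpos η hη).symm
    have := stmt10_aux C γ0 ubar u hC hγ0 hubar hu wbar w hwbarc hwc hwpos' hlb' hub' heq.symm h
    simpa [abs_sub_comm] using this
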